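/- Suppose S ⊆ ω₁ is unbounded in ω₁ and there is a separable metrizable topological space M with K(M) ≥_T (S, K(S)), i.e. there is a map φ : K(M) → K(S) carrying every cofinal subset of K(M) to a family of compact subsets of S whose union covers S. Then S is not co-stationary, i.e. ω₁ \ S is non-stationary. -/

import Mathlib

open Cardinal Set

universe u v

/-- `C` is cofinal for `P'` in `P`: every element of `P'` lies below some element of `C`. -/
def IsCofinalFor' {P : Type u} [Preorder P] (P' C : Set P) : Prop :=
  ∀ p ∈ P', ∃ c ∈ C, p ≤ c

/-- `φ : P → Q` is a relative Tukey quotient from `(P', P)` to `(Q', Q)`: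
it maps every subset of `P` cofinal for `P'` to a subset of `Q` cofinal for `Q'`. -/
def IsRelTukeyQuotient {P : Type u} {Q : Type v} [Preorder P] [Preorder Q]
    (P' : Set P) (Q' : Set Q) (φ : P → Q) : Prop :=
  ∀ C : Set P, IsCofinalFor' P' C → IsCofinalFor' Q' (φ '' C)

/-- `(P', P) ≥_T (Q', Q)`: there exists a relative Tukey quotient. -/
def RelTukeyGE {P : Type u} {Q : Type v} [Preorder P] [Preorder Q]
    (P' : Set P) (Q' : Set Q) : Prop :=
  ∃ φ : P → Q, IsRelTukeyQuotient P' Q' φ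

/-- `P ≥_T Q`: there is a Tukey quotient from `P` to `Q`. -/
def TukeyGE (P : Type u) (Q : Type v) [Preorder P] [Preorder Q] : Prop :=
  RelTukeyGE (Set.univ : Set P) (Set.univ : Set Q)

/-- `A` is unbounded in `P`: it has no upper bound in `P`. -/
def UnboundedIn {P : Type u} [Preorder P] (A : Set P) : Prop :=
  ¬ ∃ b : P, ∀ a ∈ A, a ≤ b

noncomputable section

/-- `ω₁`: the set of countable ordinals, as the canonical well-order of order type `ω₁`. -/
def O1 : Type := (Cardinal.aleph 1).ord.ToType

noncomputable instance : LinearOrder O1 :=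
  inferInstanceAs (LinearOrder (Cardinal.aleph 1).ord.ToType)

/-- `ω₁` carries its order topology. -/
instance : TopologicalSpace O1 := Preorder.topology O1

instance : OrderTopology O1 := ⟨rfl⟩

/-- `K(S)` for `S ⊆ ω₁`: the compact subsets of `S` (equivalently, compact subsets of `ω₁`
contained in `S`), ordered by inclusion. -/
def KS (S : Set O1) : Type := {K : Set O1 // K ⊆ S ∧ IsCompact K}

instance (S : Set O1) : PartialOrder (KS S) := Subtype.partialOrder _

/-- `A ⊆ ω₁` is bounded in `ω₁`. -/
def BddO1 (A : Set O1) : Prop := ∃ β : O1, ∀ x ∈ A, x ≤ β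

/-- `C ⊆ ω₁` is cub: closed in the order topology and unbounded in `ω₁`. -/
def IsCub (C : Set O1) : Prop := IsClosed C ∧ ¬ BddO1 C

/-- `S ⊆ ω₁` is stationary: it meets every cub set. -/
def IsStat (S : Set O1) : Prop := ∀ C : Set O1, IsCub C → (S ∩ C).Nonempty

/-- `K(M)`: the poset of compact subsets of a space `M`, ordered by inclusion. -/
def KM (M : Type u) [TopologicalSpace M] : Type u := {K : Set M // IsCompact K}

instance (M : Type u) [TopologicalSpace M] : PartialOrder (KM M) := Subtype.partialOrder _

instance : WellFoundedLT O1 :=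
  inferInstanceAs (WellFoundedLT (Cardinal.aleph 1).ord.ToType)

instance : IsWellOrder O1 (· < ·) := isWellOrder_lt

instance : Nonempty O1 := by
  have h0 : (0 : Ordinal.{0}) < (Cardinal.aleph 1).ord := by
    rw [Cardinal.lt_ord]
    simpa using lt_of_le_of_lt (zero_le _) Cardinal.aleph0_lt_aleph_one
  exact Ordinal.toType_nonempty_iff_ne_zero.2 h0.ne'

lemma O1.no_max (x : O1) : ∃ y : O1, x < y := by
  have hlim : Order.IsSuccLimit (Cardinal.aleph.{0} 1).ord := Cardinal.isSuccLimit_ord (Cardinal.aleph0_le_aleph 1)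
  let e := Ordinal.ToType.mk (o := (Cardinal.aleph.{0} 1).ord)
  set o : Set.Iio (Cardinal.aleph 1).ord := e.symm x with ho
  have h1 : (o : Ordinal) + 1 < (Cardinal.aleph 1).ord := hlim.add_one_lt o.2
  refine ⟨e ⟨(o : Ordinal) + 1, h1⟩, ?_⟩
  have : e.symm x < (⟨(o : Ordinal) + 1, h1⟩ : Set.Iio (Cardinal.aleph 1).ord) := by
    rw [← ho]
    exact Subtype.mk_lt_mk.2 (lt_add_one _)
  have h2 := e.lt_iff_lt.2 this
  exact lt_of_eq_of_lt (e.apply_symm_apply x).symm h2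

lemma O1.countable_bdd {A : Set O1} (hA : A.Countable) : BddO1 A := by
  have htype : Ordinal.type ((· < ·) : O1 → O1 → Prop) = (Cardinal.aleph 1).ord :=
    Ordinal.type_toType (Cardinal.aleph 1).ord
  have hcard : #A < Ordinal.cof (Ordinal.type ((· < ·) : O1 → O1 → Prop)) := by
    rw [htype, Cardinal.isRegular_aleph_one.cof_eq]
    exact (Cardinal.countable_iff_lt_aleph_one A).1 hA
  have hc2 : #A < Order.cof O1 := by rwa [Ordinal.cof_type] at hcard
  by_contra hnb
  have hcof : IsCofinal A := fun b => by
    by_contra hb; push_neg at hb; exact hnb ⟨b, fun x hx => (hb x hx).le⟩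
  exact absurd (Order.cof_le hcof) (not_le.2 hc2)

lemma O1.exists_lub {A : Set O1} (hne : A.Nonempty) (h : BddO1 A) : ∃ δ, IsLUB A δ := by
  obtain ⟨b, hb⟩ := h
  have hubne : (upperBounds A).Nonempty := ⟨b, fun x hx => hb x hx⟩
  have wf : WellFounded ((· < ·) : O1 → O1 → Prop) := IsWellFounded.wf
  refine ⟨wf.min _ hubne, wf.min_mem _ hubne, fun c hc => ?_⟩
  exact not_lt.1 (wf.not_lt_min _ hc)

lemma O1.iio_countable (δ : O1) : (Set.Iio δ).Countable := by
  have := Cardinal.mk_Iio_toType_ord_lt (c := Cardinal.aleph.{0} 1) (δ : (Cardinal.aleph.{0} 1).ord.ToType)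
  exact (Cardinal.countable_iff_lt_aleph_one _).2 this

lemma O1.succ_exists (β : O1) : ∃ γ, β < γ ∧ Set.Iic β = Set.Iio γ := by
  obtain ⟨y, hy⟩ := O1.no_max β
  have hne : (Set.Ioi β).Nonempty := ⟨y, hy⟩
  have wf : WellFounded ((· < ·) : O1 → O1 → Prop) := IsWellFounded.wf
  refine ⟨wf.min _ hne, wf.min_mem _ hne, ?_⟩
  ext x
  constructor
  · intro hx; exact lt_of_le_of_lt (show x ≤ β from hx) (show β < wf.min _ hne from wf.min_mem _ hne)
  · intro hx
    by_contra hbx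
    exact wf.not_lt_min _ (not_le.1 (show ¬ x ≤ β from hbx)) hx

lemma O1.isClosed_Ioi (β : O1) : IsClosed (Set.Ioi β) := by
  obtain ⟨γ, _, hIic⟩ := O1.succ_exists β
  rw [← isOpen_compl_iff]
  have : (Set.Ioi β)ᶜ = Set.Iio γ := by rw [← hIic]; ext x; simp
  rw [this]; exact isOpen_Iio

lemma O1.isOpen_Ioc (β δ : O1) : IsOpen (Set.Ioc β δ) := by
  obtain ⟨γ, _, hIic⟩ := O1.succ_exists δ
  have : Set.Ioc β δ = Set.Ioi β ∩ Set.Iio γ := by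
    ext x; simp [Set.mem_Ioc, ← hIic, Set.mem_Iic]
  rw [this]; exact isOpen_Ioi.inter isOpen_Iio

lemma O1.compact_bdd {K : Set O1} (hK : IsCompact K) : BddO1 K := by
  have hcover : K ⊆ ⋃ β : O1, Set.Iio β := by
    intro x _
    obtain ⟨y, hy⟩ := O1.no_max x
    exact Set.mem_iUnion.2 ⟨y, hy⟩
  obtain ⟨t, ht⟩ := hK.elim_finite_subcover (fun β : O1 => Set.Iio β)
    (fun _ => isOpen_Iio) hcover
  rcases t.eq_empty_or_nonempty with rfl | htne
  · simp only [Finset.notMem_empty, Set.iUnion_of_empty, Set.iUnion_empty] at ht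
    exact ⟨Classical.arbitrary O1, fun x hx => absurd (ht hx) (Set.notMem_empty x)⟩
  · refine ⟨t.max' htne, fun x hx => ?_⟩
    obtain ⟨β, hβt, hβ⟩ := Set.mem_iUnion₂.1 (ht hx)
    exact le_of_lt (lt_of_lt_of_le hβ (t.le_max' β hβt))

lemma O1.unbdd_gt {A : Set O1} (h : ¬ BddO1 A) (β : O1) : ∃ x ∈ A, β < x := by
  by_contra hc
  push_neg at hc
  exact h ⟨β, hc⟩

lemma O1.cub_inter (U : ℕ → Set O1) (hU : ∀ m, ¬ BddO1 (U m)) (β₀ : O1) :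
    IsClosed {δ : O1 | β₀ < δ ∧ ∀ m, ∀ β < δ, ∃ u ∈ U m, β < u ∧ u < δ} ∧
    ¬ BddO1 {δ : O1 | β₀ < δ ∧ ∀ m, ∀ β < δ, ∃ u ∈ U m, β < u ∧ u < δ} := by
  set C := {δ : O1 | β₀ < δ ∧ ∀ m, ∀ β < δ, ∃ u ∈ U m, β < u ∧ u < δ} with hC
  constructor
  · rw [← isOpen_compl_iff]
    rw [isOpen_iff_forall_mem_open]
    intro δ hδ
    simp only [Set.mem_compl_iff, hC, Set.mem_setOf_eq, not_and, not_forall] at hδ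
    by_cases h1 : β₀ < δ
    · obtain ⟨m, β, hβδ, hne⟩ := hδ h1
      push_neg at hne
      refine ⟨Set.Ioc β δ, fun δ' hδ' => ?_, O1.isOpen_Ioc β δ, hβδ, le_refl δ⟩
      simp only [Set.mem_compl_iff, hC, Set.mem_setOf_eq, not_and, not_forall]
      intro _
      refine ⟨m, β, hδ'.1, ?_⟩
      push_neg
      intro u hu huβ
      exact le_trans hδ'.2 (hne u hu huβ)
    · obtain ⟨γ, hγ, hIic⟩ := O1.succ_exists β₀
      refine ⟨Set.Iio γ, fun δ' hδ' => ?_, isOpen_Iio, ?_⟩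
      · simp only [Set.mem_compl_iff, hC, Set.mem_setOf_eq, not_and]
        intro hβδ'
        exfalso
        have : δ' ∈ Set.Iic β₀ := by rw [hIic]; exact hδ'
        exact absurd hβδ' (not_lt.2 this)
      · rw [← hIic]; exact not_lt.1 h1
  · intro hbd
    obtain ⟨b, hb⟩ := hbd
    -- build an element of C above b
    have hpick : ∀ m β, ∃ u ∈ U m, β < u := fun m β => O1.unbdd_gt (hU m) β
    choose uf hufU hufgt using hpick
    set a : ℕ → O1 := fun k => Nat.rec (uf 0 (max b β₀)) (fun k ak => uf (Nat.unpair k).1 ak) k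
      with ha
    have ha0 : a 0 = uf 0 (max b β₀) := rfl
    have hastep : ∀ k, a (k + 1) = uf (Nat.unpair k).1 (a k) := fun k => rfl
    have hmono : StrictMono a := strictMono_nat_of_lt_succ (fun k => by
      rw [hastep k]; exact hufgt _ _)
    obtain ⟨δ, hδ⟩ := O1.exists_lub ⟨a 0, Set.mem_range_self 0⟩
      (O1.countable_bdd (Set.countable_range a))
    have haleδ : ∀ k, a k ≤ δ := fun k => hδ.1 (Set.mem_range_self k)
    have hgt : ∀ c, c < δ → ∃ k, c < a k := by
      intro c hc
      by_contra hcon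
      push_neg at hcon
      exact absurd (hδ.2 (fun z hz => by obtain ⟨k, rfl⟩ := hz; exact hcon k)) (not_le.2 hc)
    have hmax0 : max b β₀ < a 0 := by rw [ha0]; exact hufgt _ _
    have hδC : δ ∈ C := by
      refine ⟨lt_of_le_of_lt (le_max_right b β₀) (lt_of_lt_of_le hmax0 (haleδ 0)), ?_⟩
      intro m β hβ
      obtain ⟨k, hk⟩ := hgt β hβ
      set k' := Nat.pair m k with hk'
      refine ⟨a (k' + 1), ?_, ?_, ?_⟩
      · rw [hastep k', hk', Nat.unpair_pair]; exact hufU _ _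
      · exact lt_of_lt_of_le hk (hmono.monotone (le_trans (Nat.right_le_pair m k) (Nat.le_succ _)))
      · exact lt_of_lt_of_le (hmono (Nat.lt_succ_self (k' + 1))) (haleδ (k' + 2))
    have : δ ≤ b := hb δ hδC
    exact absurd (lt_of_le_of_lt (le_max_left b β₀) (lt_of_lt_of_le hmax0 (haleδ 0))) (not_lt.2 this)

lemma O1.cofinal_seq {δ : O1} (hne : (Set.Iio δ).Nonempty) :
    ∃ β : ℕ → O1, Monotone β ∧ (∀ n, β n < δ) ∧ ∀ c < δ, ∃ n, c ≤ β n := by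
  obtain ⟨e, he⟩ := (O1.iio_countable δ).exists_eq_range hne
  have heδ : ∀ n, e n < δ := fun n => by
    have : e n ∈ Set.Iio δ := by rw [he]; exact Set.mem_range_self n
    exact this
  set β : ℕ → O1 := fun n => Nat.rec (e 0) (fun n βn => max βn (e (n + 1))) n with hβ
  have hβ0 : β 0 = e 0 := rfl
  have hβstep : ∀ n, β (n + 1) = max (β n) (e (n + 1)) := fun n => rfl
  have hmono : Monotone β := monotone_nat_of_le_succ (fun n => by rw [hβstep]; exact le_max_left _ _)
  have hβδ : ∀ n, β n < δ := by
    intro n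
    induction n with
    | zero => rw [hβ0]; exact heδ 0
    | succ n ih => rw [hβstep]; exact max_lt ih (heδ (n + 1))
  have heβ : ∀ n, e n ≤ β n := fun n => by
    cases n with
    | zero => rw [hβ0]
    | succ n => rw [hβstep]; exact le_max_right _ _
  refine ⟨β, hmono, hβδ, fun c hc => ?_⟩
  have : c ∈ Set.range e := by rw [← he]; exact hc
  obtain ⟨n, rfl⟩ := this
  exact ⟨n, heβ n⟩

lemma exists_net {M : Type u} [MetricSpace M] {A D : Set M} (hA : IsCompact A)
    (hAne : A.Nonempty) (hD : Dense D) {ε : ℝ} (hε : 0 < ε) :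
    ∃ F : Set M, F.Finite ∧ F.Nonempty ∧ F ⊆ D ∧ Metric.hausdorffDist A F < ε := by
  have hε3 : 0 < ε / 3 := by linarith
  obtain ⟨t, hts, htfin, htcov⟩ := totallyBounded_iff_subset.1 hA.totallyBounded
    _ (Metric.dist_mem_uniformity hε3)
  have hw : ∀ y : M, ∃ z, z ∈ D ∧ dist z y < ε / 3 := by
    intro y
    obtain ⟨z, hz⟩ := Metric.dense_iff.1 hD y _ hε3
    exact ⟨z, hz.2, Metric.mem_ball.1 hz.1⟩
  choose w hwD hwd using hw
  have htne : t.Nonempty := by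
    obtain ⟨x, hx⟩ := hAne
    obtain ⟨y, hy, _⟩ := Set.mem_iUnion₂.1 (htcov hx)
    exact ⟨y, hy⟩
  refine ⟨w '' t, htfin.image w, htne.image w, fun z hz => ?_, ?_⟩
  · obtain ⟨y, _, rfl⟩ := hz; exact hwD y
  · have hle : Metric.hausdorffDist A (w '' t) ≤ 2 * ε / 3 := by
      apply Metric.hausdorffDist_le_of_mem_dist (by linarith)
      · intro x hx
        obtain ⟨y, hyt, hxy⟩ := Set.mem_iUnion₂.1 (htcov hx)
        refine ⟨w y, Set.mem_image_of_mem w hyt, ?_⟩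
        have h1 : dist x y < ε / 3 := hxy
        have h2 : dist y (w y) < ε / 3 := by rw [dist_comm]; exact hwd y
        calc dist x (w y) ≤ dist x y + dist y (w y) := dist_triangle _ _ _
          _ ≤ 2 * ε / 3 := by linarith
      · intro z hz
        obtain ⟨y, hyt, rfl⟩ := hz
        exact ⟨y, hts hyt, by have := hwd y; linarith⟩
    linarith

lemma compact_union_of_hd {M : Type u} [MetricSpace M] {A : Set M} (hA : IsCompact A)
    (hAne : A.Nonempty) (gs : ℕ → Set M) (hgc : ∀ n, IsCompact (gs n))
    (hgne : ∀ n, (gs n).Nonempty)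
    (hd : ∀ n, Metric.hausdorffDist (gs n) A < 1 / ((n : ℝ) + 1)) :
    IsCompact (A ∪ ⋃ n, gs n) := by
  apply IsSeqCompact.isCompact
  intro y hy
  have hsel : ∀ i, ∃ v : ℕ, (v = 0 ∧ y i ∈ A) ∨ (∃ n, v = n + 1 ∧ y i ∈ gs n) := by
    intro i
    rcases hy i with hiA | hiU
    · exact ⟨0, Or.inl ⟨rfl, hiA⟩⟩
    · obtain ⟨n, hn⟩ := Set.mem_iUnion.1 hiU
      exact ⟨n + 1, Or.inr ⟨n, rfl, hn⟩⟩
  choose f hf using hsel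
  by_cases hcase : ∃ v, ∃ᶠ i in Filter.atTop, f i = v
  · obtain ⟨v, hv⟩ := hcase
    obtain ⟨ψ, hψmono, hψ⟩ := Filter.extraction_of_frequently_atTop hv
    set P : Set M := if v = 0 then A else gs (v - 1) with hP
    have hPc : IsCompact P := by
      rw [hP]; split_ifs
      · exact hA
      · exact hgc _
    have hPK : P ⊆ A ∪ ⋃ n, gs n := by
      rw [hP]; split_ifs
      · exact Set.subset_union_left
      · exact le_trans (Set.subset_iUnion gs (v - 1)) Set.subset_union_right
    have hyP : ∀ j, (y ∘ ψ) j ∈ P := by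
      intro j
      rcases hf (ψ j) with ⟨h0, hmem⟩ | ⟨n, hn, hmem⟩
      · have : v = 0 := by rw [← hψ j, h0]
        rw [hP, if_pos this]; exact hmem
      · have hv' : v = n + 1 := by rw [← hψ j, hn]
        have : ¬ v = 0 := by omega
        rw [hP, if_neg this, hv']; simpa using hmem
    obtain ⟨a, haP, ψ₂, hψ₂mono, hψ₂⟩ := hPc.isSeqCompact hyP
    exact ⟨a, hPK haP, ψ ∘ ψ₂, hψmono.comp hψ₂mono, hψ₂⟩
  · push_neg at hcase
    have hev : ∀ v, ∀ᶠ i in Filter.atTop, f i ≠ v := by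
      intro v
      have := hcase v
      exact this
    have htf : Filter.Tendsto f Filter.atTop Filter.atTop := by
      rw [Filter.tendsto_atTop]
      intro b
      induction b with
      | zero => exact Filter.Eventually.of_forall (fun i => Nat.zero_le _)
      | succ b ih =>
        filter_upwards [ih, hev b] with i h1 h2
        omega
    have hz : ∀ i, ∃ z, z ∈ A ∧ dist (y i) z ≤ 1 / ((f i : ℝ)) := by
      intro i
      rcases hf i with ⟨h0, hmem⟩ | ⟨n, hn, hmem⟩
      · exact ⟨y i, hmem, by rw [h0]; simp⟩
      · have hfin : EMetric.hausdorffEdist (gs n) A ≠ ⊤ :=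
          Metric.hausdorffEdist_ne_top_of_nonempty_of_bounded (hgne n) hAne
            (hgc n).isBounded hA.isBounded
        obtain ⟨z, hzA, hzd⟩ := Metric.exists_dist_lt_of_hausdorffDist_lt hmem (hd n) hfin
        refine ⟨z, hzA, ?_⟩
        rw [hn]
        push_cast
        exact hzd.le
    choose z hzA hzd using hz
    obtain ⟨a, haA, ψ, hψmono, hψ⟩ := hA.isSeqCompact (fun i => hzA i)
    have hdist0 : Filter.Tendsto (fun j => dist (y (ψ j)) (z (ψ j))) Filter.atTop (nhds 0) := by
      apply squeeze_zero (fun j => dist_nonneg) (fun j => hzd (ψ j))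
      have h1 : Filter.Tendsto (fun n : ℕ => 1 / (n : ℝ)) Filter.atTop (nhds 0) :=
        tendsto_one_div_atTop_nhds_zero_nat
      exact h1.comp (htf.comp hψmono.tendsto_atTop)
    refine ⟨a, Or.inl haA, ψ, hψmono, ?_⟩
    apply Filter.Tendsto.congr_dist hψ
    simpa [dist_comm] using hdist0

/-- Suppose `S ⊆ ω₁` is unbounded and there is a separable metrizable `M` with
`K(M) ≥_T (S, K(S))`, i.e. a map `φ : K(M) → K(S)` carrying every cofinal subset of `K(M)`
to a family of compact subsets of `S` whose union covers `S`.  Then `S` is not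
co-stationary: `ω₁ \ S` is non-stationary. -/
theorem statement18 (S : Set O1) (hub : ¬ BddO1 S)
    (M : Type u) [TopologicalSpace M]
    [TopologicalSpace.MetrizableSpace M] [TopologicalSpace.SeparableSpace M]
    (h : ∃ φ : KM M → KS S, ∀ C : Set (KM M),
      (∀ K : KM M, ∃ c ∈ C, K ≤ c) → ∀ x ∈ S, ∃ c ∈ C, x ∈ (φ c).1) :
    ¬ IsStat (Set.univ \ S) := by
  intro hstat
  classical
  obtain ⟨φ, hφ⟩ := h
  -- Step 1: for each `x ∈ S` pick a compact `g x` such that every compact above it captures `x`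
  have hg0 : ∀ x ∈ S, ∃ K : KM M, ∀ K' : KM M, K ≤ K' → x ∈ (φ K').1 := by
    intro x hx
    by_contra hc
    push_neg at hc
    have hcof : ∀ K : KM M, ∃ c ∈ {c : KM M | x ∉ (φ c).1}, K ≤ c := by
      intro K
      obtain ⟨K', hKK', hx'⟩ := hc K
      exact ⟨K', hx', hKK'⟩
    obtain ⟨c, hc1, hc2⟩ := hφ _ hcof x hx
    exact hc1 hc2
  haveI : Nonempty (KM M) := ⟨⟨∅, isCompact_empty⟩⟩
  choose! g hg using hg0
  -- Step 2: points with empty `g` value are bounded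
  obtain ⟨β₀, hβ₀⟩ := O1.compact_bdd (φ ⟨∅, isCompact_empty⟩).2.2
  have hgne : ∀ x, x ∈ S → β₀ < x → (g x).1.Nonempty := by
    intro x hx hβx
    rcases Set.eq_empty_or_nonempty (g x).1 with he | hne
    · exfalso
      have hle : g x ≤ (⟨∅, isCompact_empty⟩ : KM M) := by
        show (g x).1 ⊆ ∅
        rw [he]
      exact absurd (hβ₀ x (hg x hx _ hle)) (not_le.2 hβx)
    · exact hne
  letI : MetricSpace M := TopologicalSpace.metrizableSpaceMetric M
  obtain ⟨D, hDc, hDd⟩ := TopologicalSpace.exists_countable_dense M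
  haveI : Countable ↥{F : Set M | F.Finite ∧ F ⊆ D} :=
    (Set.countable_setOf_finite_subset hDc).to_subtype
  -- Step 3: a countable family of "basic" subsets of `S`
  set V : ↥{F : Set M | F.Finite ∧ F ⊆ D} × ℕ → Set O1 := fun p =>
    {x | x ∈ S ∧ β₀ < x ∧ (p.1.1 : Set M).Nonempty ∧
      Metric.hausdorffDist (g x).1 p.1.1 < 1 / ((p.2 : ℝ) + 1)} with hV
  have hbex : ∀ p, ∃ β : O1, BddO1 (V p) → ∀ x ∈ V p, x ≤ β := by
    intro p
    by_cases hbp : BddO1 (V p)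
    · obtain ⟨β, hβ⟩ := hbp
      exact ⟨β, fun _ => hβ⟩
    · exact ⟨Classical.arbitrary O1, fun hb => absurd hb hbp⟩
  choose bB hbB using hbex
  obtain ⟨β₁, hβ₁⟩ := O1.countable_bdd (Set.countable_range bB)
  -- Step 4: pick a large point `a0` of `S`
  obtain ⟨a0, ha0S, ha0gt⟩ := O1.unbdd_gt hub (max β₀ β₁)
  have ha0β₀ : β₀ < a0 := lt_of_le_of_lt (le_max_left _ _) ha0gt
  have hA : IsCompact (g a0).1 := (g a0).2
  have hAne : (g a0).1.Nonempty := hgne a0 ha0S ha0β₀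
  -- Step 5: the sets of points whose `g`-value is Hausdorff-close to `g a0` are unbounded
  have hUm : ∀ m : ℕ, ∃ Um : Set O1, ¬ BddO1 Um ∧
      ∀ x ∈ Um, x ∈ S ∧ β₀ < x ∧
        Metric.hausdorffDist (g x).1 (g a0).1 < 1 / ((m : ℝ) + 1) := by
    intro m
    have hεpos : (0 : ℝ) < 1 / (((3 * m + 3 : ℕ) : ℝ) + 1) := by positivity
    obtain ⟨F, hFfin, hFne, hFD, hFd⟩ := exists_net hA hAne hDd hεpos
    set p : ↥{F : Set M | F.Finite ∧ F ⊆ D} × ℕ := (⟨F, hFfin, hFD⟩, 3 * m + 3) with hp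
    have ha0V : a0 ∈ V p := ⟨ha0S, ha0β₀, hFne, hFd⟩
    have hVunb : ¬ BddO1 (V p) := by
      intro hb
      have h1 : a0 ≤ bB p := hbB p hb a0 ha0V
      have h2 : bB p ≤ β₁ := hβ₁ _ (Set.mem_range_self p)
      exact absurd (lt_of_le_of_lt (le_max_right β₀ β₁) ha0gt) (not_lt.2 (le_trans h1 h2))
    refine ⟨V p, hVunb, ?_⟩
    rintro x ⟨hxS, hxβ, hFne', hxd⟩
    refine ⟨hxS, hxβ, ?_⟩
    have hfin1 : EMetric.hausdorffEdist (g x).1 (F : Set M) ≠ ⊤ :=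
      Metric.hausdorffEdist_ne_top_of_nonempty_of_bounded (hgne x hxS hxβ) hFne'
        (g x).2.isBounded hFfin.isBounded
    have htri : Metric.hausdorffDist (g x).1 (g a0).1 ≤
        Metric.hausdorffDist (g x).1 (F : Set M) +
          Metric.hausdorffDist (F : Set M) (g a0).1 :=
      Metric.hausdorffDist_triangle hfin1
    have hcomm : Metric.hausdorffDist (F : Set M) (g a0).1 =
        Metric.hausdorffDist (g a0).1 (F : Set M) := Metric.hausdorffDist_comm
    have hxd' : Metric.hausdorffDist (g x).1 (F : Set M) < 1 / (((3 * m + 3 : ℕ) : ℝ) + 1) := hxd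
    have hnum : 1 / (((3 * m + 3 : ℕ) : ℝ) + 1) + 1 / (((3 * m + 3 : ℕ) : ℝ) + 1) ≤
        1 / ((m : ℝ) + 1) := by
      have hm : (0 : ℝ) ≤ (m : ℝ) := Nat.cast_nonneg m
      rw [← add_div]
      rw [div_le_div_iff₀ (by positivity) (by positivity)]
      push_cast
      ring_nf
      nlinarith
    calc Metric.hausdorffDist (g x).1 (g a0).1
        ≤ Metric.hausdorffDist (g x).1 (F : Set M) +
            Metric.hausdorffDist (F : Set M) (g a0).1 := htri
      _ < 1 / (((3 * m + 3 : ℕ) : ℝ) + 1) + 1 / (((3 * m + 3 : ℕ) : ℝ) + 1) := by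
          rw [hcomm]; exact add_lt_add hxd' hFd
      _ ≤ 1 / ((m : ℝ) + 1) := hnum
  choose U hU1 hU2 using hUm
  -- Step 6: the club of points closed under all the `U m`, and a point of `univ \ S` in it
  obtain ⟨hCclosed, hCunb⟩ := O1.cub_inter U hU1 (max β₀ β₁)
  obtain ⟨δ, hδT, hδgt, hδcof⟩ := hstat _ ⟨hCclosed, hCunb⟩
  -- Step 7: a strictly increasing sequence in `S` converging to `δ` with convergent `g`-values
  have hδne : (Set.Iio δ).Nonempty := ⟨max β₀ β₁, hδgt⟩
  obtain ⟨βs, hβmono, hβlt, hβcof⟩ := O1.cofinal_seq hδne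
  have hpick : ∀ m : ℕ, ∀ c : O1, c < δ → ∃ u, u ∈ U m ∧ c < u ∧ u < δ := by
    intro m c hc
    obtain ⟨u, hu1, hu2, hu3⟩ := hδcof m c hc
    exact ⟨u, hu1, hu2, hu3⟩
  set X : ℕ → {b : O1 // b < δ} := fun n => Nat.rec
      (⟨(hpick 0 (βs 0) (hβlt 0)).choose, (hpick 0 (βs 0) (hβlt 0)).choose_spec.2.2⟩)
      (fun n Xn => ⟨(hpick (n + 1) (max Xn.1 (βs (n + 1)))
          (max_lt Xn.2 (hβlt (n + 1)))).choose,
        (hpick (n + 1) (max Xn.1 (βs (n + 1)))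
          (max_lt Xn.2 (hβlt (n + 1)))).choose_spec.2.2⟩) n with hX
  set x : ℕ → O1 := fun n => (X n).1 with hx
  have hx0 : x 0 ∈ U 0 ∧ βs 0 < x 0 :=
    ⟨(hpick 0 (βs 0) (hβlt 0)).choose_spec.1, (hpick 0 (βs 0) (hβlt 0)).choose_spec.2.1⟩
  have hxs : ∀ n, x (n + 1) ∈ U (n + 1) ∧ max (x n) (βs (n + 1)) < x (n + 1) := fun n =>
    ⟨(hpick (n + 1) (max (X n).1 (βs (n + 1))) (max_lt (X n).2 (hβlt (n + 1)))).choose_spec.1,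
     (hpick (n + 1) (max (X n).1 (βs (n + 1))) (max_lt (X n).2 (hβlt (n + 1)))).choose_spec.2.1⟩
  have hmem : ∀ n, x n ∈ U n := by
    intro n
    cases n with
    | zero => exact hx0.1
    | succ n => exact (hxs n).1
  have hstrict : StrictMono x :=
    strictMono_nat_of_lt_succ fun n => lt_of_le_of_lt (le_max_left _ _) (hxs n).2
  have hxlt : ∀ n, x n < δ := fun n => (X n).2
  have hlub : IsLUB (Set.range x) δ := by
    constructor
    · rintro z ⟨n, rfl⟩
      exact (hxlt n).le
    · intro b hb
      by_contra hbδ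
      push_neg at hbδ
      obtain ⟨n, hn⟩ := hβcof b hbδ
      have h1 : βs (n + 1) < x (n + 1) := lt_of_le_of_lt (le_max_right _ _) (hxs n).2
      have h2 : b < x (n + 1) := lt_of_le_of_lt (le_trans hn (hβmono (Nat.le_succ n))) h1
      exact absurd (hb (Set.mem_range_self (n + 1))) (not_le.2 h2)
  have htend : Filter.Tendsto x Filter.atTop (nhds δ) :=
    tendsto_atTop_isLUB hstrict.monotone hlub
  -- Step 8: the compact set capturing the whole sequence
  have hxS : ∀ n, x n ∈ S := fun n => (hU2 n (x n) (hmem n)).1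
  have hxβ : ∀ n, β₀ < x n := fun n => (hU2 n (x n) (hmem n)).2.1
  have hK : IsCompact ((g a0).1 ∪ ⋃ n, (g (x n)).1) :=
    compact_union_of_hd hA hAne (fun n => (g (x n)).1) (fun n => (g (x n)).2)
      (fun n => hgne _ (hxS n) (hxβ n)) (fun n => (hU2 n (x n) (hmem n)).2.2)
  have hφmem : ∀ n, x n ∈ (φ ⟨_, hK⟩).1 := by
    intro n
    apply hg (x n) (hxS n)
    show (g (x n)).1 ⊆ (g a0).1 ∪ ⋃ n, (g (x n)).1
    exact le_trans (Set.subset_iUnion (fun n => (g (x n)).1) n) Set.subset_union_right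
  have hclosed : IsClosed (φ ⟨_, hK⟩).1 := (φ ⟨_, hK⟩).2.2.isClosed
  have hδS : δ ∈ S :=
    (φ ⟨_, hK⟩).2.1 (hclosed.mem_of_tendsto htend (Filter.Eventually.of_forall hφmem))
  exact hδT.2 hδS
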